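/- Let X be a Banach space, P a weight matrix, and 1 ≤ p < ∞. If a sequence (x_n) in X is weakly (P,p)-convergent to 0 (i.e., for every continuous linear functional f on X, the sequence |f(x_n)|^p P-converges to 0), then 0 is a weak cluster point of (x_n). -/

import Mathlib

set_option maxHeartbeats 1000000
open Filter Topology

/-- `x₀` is a weak cluster point of the sequence `x`: every weak neighborhood of `x₀`
(determined by finitely many continuous linear functionals and an `ε`) contains `x n`
for arbitrarily large `n`. -/
def IsWeakClusterPt {X : Type*} [NormedAddCommGroup X] [NormedSpace ℝ X]
    (x₀ : X) (x : ℕ → X) : Prop :=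
  ∀ (k : ℕ) (f : Fin k → X →L[ℝ] ℝ) (ε : ℝ), 0 < ε → ∀ N : ℕ,
    ∃ n ≥ N, ∀ i, |f i (x n) - f i x₀| < ε

lemma aux_lower (P : ℕ → ℝ) (hP0 : ∀ m, 0 ≤ P m)
    (hPfin : (Function.support P).Finite) (hPsum : ∑' m, P m = 1)
    (g : ℕ → ℝ) (hgnn : ∀ m, 0 ≤ g m) (c : ℝ) (_hc : 0 ≤ c)
    (N : ℕ) (hgc : ∀ m, N ≤ m → c ≤ g m) :
    c * (1 - ∑ m ∈ Finset.range N, P m) ≤ ∑' m, P m * g m := by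
  have hsumm : ∀ h : ℕ → ℝ, Summable (fun m => P m * h m) := by
    intro h
    apply summable_of_ne_finset_zero (s := hPfin.toFinset)
    intro m hm
    have : P m = 0 := Function.notMem_support.mp (by simpa using hm)
    simp [this]
  have hPsummable : Summable P := by simpa using hsumm (fun _ => 1)
  have hshift : ∑' m, P (m + N) = 1 - ∑ m ∈ Finset.range N, P m := by
    have := Summable.sum_add_tsum_nat_add (f := P) N hPsummable
    rw [hPsum] at this
    linarith
  have hsum2 : Summable (fun m => P (m + N) * g (m + N)) :=
    (summable_nat_add_iff N).mpr (hsumm g)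
  calc c * (1 - ∑ m ∈ Finset.range N, P m)
      = ∑' m, P (m + N) * c := by rw [tsum_mul_right, hshift, mul_comm]
    _ ≤ ∑' m, P (m + N) * g (m + N) := by
        have hs1 : Summable (fun m => P (m + N) * c) :=
          ((summable_nat_add_iff N).mpr hPsummable).mul_right _
        apply Summable.tsum_le_tsum _ hs1 hsum2
        intro m
        exact mul_le_mul_of_nonneg_left (hgc (m + N) (Nat.le_add_left N m)) (hP0 (m + N))
    _ ≤ ∑' m, P m * g m := by
        rw [← Summable.sum_add_tsum_nat_add (f := fun m => P m * g m) N (hsumm g)]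
        have : 0 ≤ ∑ m ∈ Finset.range N, P m * g m :=
          Finset.sum_nonneg fun m _ => mul_nonneg (hP0 m) (hgnn m)
        linarith

theorem stmt3 {X : Type*} [NormedAddCommGroup X] [NormedSpace ℝ X] [CompleteSpace X]
    (P : ℕ → ℕ → ℝ) (x : ℕ → X) (p : ℝ) (hp : 1 ≤ p)
    (hP0 : ∀ n m, 0 ≤ P n m)
    (hPfin : ∀ n, (Function.support (P n)).Finite)
    (hPsum : ∀ n, ∑' m, P n m = 1)
    (hPcol : ∀ m, Tendsto (fun n => P n m) atTop (𝓝 0))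
    (hconv : ∀ f : X →L[ℝ] ℝ,
      Tendsto (fun n => ∑' m, P n m * |f (x m)| ^ p) atTop (𝓝 0)) :
    IsWeakClusterPt 0 x := by
  intro k f ε hε N
  by_contra hcon
  push_neg at hcon
  -- simplify: f i 0 = 0
  have hcon' : ∀ n, N ≤ n → ∃ i, ε ≤ |f i (x n)| := by
    intro n hn
    obtain ⟨i, hi⟩ := hcon n hn
    exact ⟨i, by simpa using hi⟩
  set g : ℕ → ℝ := fun m => ∑ i, |f i (x m)| ^ p with hg
  have hgnn : ∀ m, 0 ≤ g m := fun m =>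
    Finset.sum_nonneg fun i _ => Real.rpow_nonneg (abs_nonneg _) p
  -- summability helper
  have hsumm : ∀ n (h : ℕ → ℝ), Summable (fun m => P n m * h m) := by
    intro n h
    apply summable_of_ne_finset_zero (s := (hPfin n).toFinset)
    intro m hm
    have : P n m = 0 := Function.notMem_support.mp (by simpa using hm)
    simp [this]
  have hPsummable : ∀ n, Summable (P n) := by
    intro n
    simpa using hsumm n (fun _ => 1)
  -- the combined sequence tends to 0
  have hS : Tendsto (fun n => ∑' m, P n m * g m) atTop (𝓝 0) := by
    have heq : ∀ n, ∑' m, P n m * g m = ∑ i, ∑' m, P n m * |f i (x m)| ^ p := by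
      intro n
      rw [← Summable.tsum_finsetSum (fun i _ => hsumm n _)]
      congr 1; ext m
      rw [hg]; rw [Finset.mul_sum]
    simp only [heq]
    have := tendsto_finset_sum (Finset.univ : Finset (Fin k))
      (fun i _ => hconv (f i))
    simpa using this
  -- lower bound
  have hlow : ∀ n, ε ^ p * (1 - ∑ m ∈ Finset.range N, P n m) ≤ ∑' m, P n m * g m := by
    intro n
    apply aux_lower (P n) (hP0 n) (hPfin n) (hPsum n) g hgnn _ (le_of_lt (Real.rpow_pos_of_pos hε p)) N
    intro m hm
    obtain ⟨i, hi⟩ := hcon' m hm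
    calc ε ^ p ≤ |f i (x m)| ^ p :=
          Real.rpow_le_rpow (le_of_lt hε) hi (by linarith)
      _ ≤ g m := Finset.single_le_sum (f := fun j => |f j (x m)| ^ p)
          (fun j _ => Real.rpow_nonneg (abs_nonneg _) p) (Finset.mem_univ i)
  -- take limits
  have hlim : Tendsto (fun n => ε ^ p * (1 - ∑ m ∈ Finset.range N, P n m))
      atTop (𝓝 (ε ^ p)) := by
    have h1 : Tendsto (fun n => ∑ m ∈ Finset.range N, P n m) atTop (𝓝 0) := by
      have := tendsto_finset_sum (Finset.range N) (fun m _ => hPcol m)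
      simpa using this
    have : Tendsto (fun n => ε ^ p * (1 - ∑ m ∈ Finset.range N, P n m))
        atTop (𝓝 (ε ^ p * (1 - 0))) :=
      (tendsto_const_nhds.sub h1).const_mul _
    simpa using this
  have : ε ^ p ≤ 0 := le_of_tendsto_of_tendsto' hlim hS hlow
  exact absurd this (not_le.mpr (Real.rpow_pos_of_pos hε p))
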